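/- Let A = (A^m)_{m≥1} be a collection with A^m ∈ Q((x_1,...,x_m)) satisfying A^m(x_1,...,x_m) = A^{m-1}(x_1,...,x_{m-1}) − A^{m-1}(x_2,...,x_m) for all m ≥ 2. Then A is alternal: for all p,q ≥ 1, the sum of A^{p+q} evaluated over all shuffles of (x_1,...,x_p) with (x_{p+1},...,x_{p+q}) vanishes. -/

import Mathlib

open scoped BigOperators

/-- All shuffle interleavings of two lists, preserving the relative order of each. -/
def shuffles {α : Type*} : List α → List α → List (List α)
  | [], ys => [ys]
  | xs, [] => [xs]
  | x :: xs, y :: ys =>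
      ((shuffles xs (y :: ys)).map (x :: ·)) ++ ((shuffles (x :: xs) ys).map (y :: ·))
termination_by xs ys => xs.length + ys.length
decreasing_by all_goals (simp; try omega)

variable {K : Type*} [Field K]

/-- The shuffle sum of a mould `M` over all interleavings of `a` and `b`. -/
def shSum (M : List K → K) (a b : List K) : K := ((shuffles a b).map M).sum

/-- The mould (concatenation-deconcatenation) product. -/
def mmul (M N : List K → K) (w : List K) : K :=
  ∑ k ∈ Finset.range (w.length + 1), M (w.take k) * N (w.drop k)

/-- The unit mould: `1` in length `0` and `0` otherwise. -/
def one : List K → K := fun l => match l with | [] => 1 | _ => 0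

lemma shuffles_nil_left {α : Type*} (ys : List α) : shuffles [] ys = [ys] := by
  cases ys <;> rw [shuffles]

lemma shuffles_nil_right {α : Type*} (xs : List α) : shuffles xs [] = [xs] := by
  cases xs <;> rw [shuffles] <;> simp

lemma shuffles_cons_cons {α : Type*} (x y : α) (xs ys : List α) :
    shuffles (x :: xs) (y :: ys)
      = ((shuffles xs (y :: ys)).map (x :: ·)) ++ ((shuffles (x :: xs) ys).map (y :: ·)) := by
  rw [shuffles]

lemma length_of_mem_shuffles {α : Type*} :
    ∀ (a b w : List α), w ∈ shuffles a b → w.length = a.length + b.length := by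
  intro a b
  induction a, b using shuffles.induct with
  | case1 ys => simp [shuffles_nil_left]
  | case2 xs => intro w h; rw [shuffles_nil_right] at h; simp_all
  | case3 x xs y ys ih1 ih2 =>
      intro w h
      rw [shuffles_cons_cons] at h
      simp only [List.mem_append, List.mem_map] at h
      rcases h with ⟨w', hw', rfl⟩ | ⟨w', hw', rfl⟩
      · have := ih1 w' hw'; simp_all; omega
      · have := ih2 w' hw'; simp_all; omega

lemma ne_nil_of_mem_shuffles_right {α : Type*} {a b w : List α} (hb : b ≠ [])
    (hw : w ∈ shuffles a b) : w ≠ [] := by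
  have h := length_of_mem_shuffles a b w hw
  intro hnil
  subst hnil
  obtain ⟨c, cs, rfl⟩ := List.exists_cons_of_ne_nil hb
  simp at h

lemma ne_nil_of_mem_shuffles_left {α : Type*} {a b w : List α} (ha : a ≠ [])
    (hw : w ∈ shuffles a b) : w ≠ [] := by
  have h := length_of_mem_shuffles a b w hw
  intro hnil
  subst hnil
  obtain ⟨c, cs, rfl⟩ := List.exists_cons_of_ne_nil ha
  simp at h
  omega

lemma sum_map_sub {l : List (List K)} (f g : List K → K) :
    (l.map (fun w => f w - g w)).sum = (l.map f).sum - (l.map g).sum := by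
  induction l with
  | nil => simp
  | cons h t ih => simp [ih]; ring

/-- Key structural lemma: summing `F ∘ dropLast` over shuffles splits according to
which list contributed the last letter. -/
theorem sum_dropLast_aux :
    ∀ (n : ℕ) (F : List K → K) (u v : List K), u.length + v.length ≤ n → u ≠ [] → v ≠ [] →
    ((shuffles u v).map (fun w => F w.dropLast)).sum
      = ((shuffles u.dropLast v).map F).sum + ((shuffles u v.dropLast).map F).sum := by
  intro n
  induction n with
  | zero => intro F u v hn hu hv; cases u <;> simp_all
  | succ n ih =>
    intro F u v hn hu hv
    obtain ⟨x, xs, rfl⟩ := List.exists_cons_of_ne_nil hu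
    obtain ⟨y, ys, rfl⟩ := List.exists_cons_of_ne_nil hv
    simp only [List.length_cons] at hn
    rw [shuffles_cons_cons, List.map_append, List.map_map, List.map_map, List.sum_append]
    have e1 : ((shuffles xs (y :: ys)).map ((fun w => F w.dropLast) ∘ (x :: ·))).sum
        = ((shuffles xs (y :: ys)).map (fun w => F (x :: w.dropLast))).sum := by
      apply congrArg
      apply List.map_congr_left
      intro w hw
      obtain ⟨c, cs, rfl⟩ := List.exists_cons_of_ne_nil
        (ne_nil_of_mem_shuffles_right (by simp) hw)
      simp
    have e2 : ((shuffles (x :: xs) ys).map ((fun w => F w.dropLast) ∘ (y :: ·))).sum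
        = ((shuffles (x :: xs) ys).map (fun w => F (y :: w.dropLast))).sum := by
      apply congrArg
      apply List.map_congr_left
      intro w hw
      obtain ⟨c, cs, rfl⟩ := List.exists_cons_of_ne_nil
        (ne_nil_of_mem_shuffles_left (by simp) hw)
      simp
    rw [e1, e2]
    rcases eq_or_ne xs [] with rfl | hxs
    · rcases eq_or_ne ys [] with rfl | hys
      · -- Case A : u = [x], v = [y]
        simp [shuffles_nil_left, shuffles_nil_right, add_comm]
      · -- Case B : u = [x], v = y :: ys with ys ≠ []
        obtain ⟨c, cs, rfl⟩ := List.exists_cons_of_ne_nil hys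
        have h2 := ih (fun w => F (y :: w)) [x] (c :: cs)
          (by simp only [List.length_cons] at hn ⊢; simp; omega) (by simp) (by simp)
        simp only [shuffles_nil_left, List.map_cons, List.map_nil, List.sum_cons,
          List.sum_nil, List.dropLast_cons₂, List.dropLast_singleton,
          shuffles_cons_cons, List.map_append, List.map_map, List.sum_append,
          Function.comp_def] at h2 ⊢
        rw [h2]
        ring
    · rcases eq_or_ne ys [] with rfl | hys
      · -- Case C : u = x :: xs with xs ≠ [], v = [y]
        obtain ⟨c, cs, rfl⟩ := List.exists_cons_of_ne_nil hxs
        have h1 := ih (fun w => F (x :: w)) (c :: cs) [y]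
          (by simp only [List.length_cons] at hn ⊢; simp; omega) (by simp) (by simp)
        simp only [shuffles_nil_left, shuffles_nil_right, List.map_cons, List.map_nil,
          List.sum_cons, List.sum_nil, List.dropLast_cons₂, List.dropLast_singleton,
          shuffles_cons_cons, List.map_append, List.map_map, List.sum_append,
          Function.comp_def] at h1 ⊢
        rw [h1]
        ring
      · -- Case D : both tails nonempty
        obtain ⟨c, cs, rfl⟩ := List.exists_cons_of_ne_nil hxs
        obtain ⟨d, ds, rfl⟩ := List.exists_cons_of_ne_nil hys
        have h1 := ih (fun w => F (x :: w)) (c :: cs) (y :: d :: ds)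
          (by simp only [List.length_cons] at hn ⊢; omega) (by simp) (by simp)
        have h2 := ih (fun w => F (y :: w)) (x :: c :: cs) (d :: ds)
          (by simp only [List.length_cons] at hn ⊢; omega) (by simp) (by simp)
        simp only [List.dropLast_cons₂, List.dropLast_singleton,
          shuffles_cons_cons, List.map_append, List.map_map, List.sum_append,
          List.map_cons, List.sum_cons, Function.comp_def] at h1 h2 ⊢
        rw [h1, h2]
        ring

theorem sum_dropLast (F : List K → K) (u v : List K) (hu : u ≠ []) (hv : v ≠ []) :
    ((shuffles u v).map (fun w => F w.dropLast)).sum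
      = ((shuffles u.dropLast v).map F).sum + ((shuffles u v.dropLast).map F).sum :=
  sum_dropLast_aux (u.length + v.length) F u v le_rfl hu hv

theorem stmt0_aux (A : List K → K)
    (hrec : ∀ (x y : K) (l : List K), A (x :: (l ++ [y])) = A (x :: l) - A (l ++ [y])) :
    ∀ (n : ℕ) (a b : List K), a.length + b.length ≤ n → a ≠ [] → b ≠ [] →
      shSum A a b = 0 := by
  intro n
  induction n with
  | zero => intro a b hn ha hb; cases a <;> simp_all
  | succ n ih =>
    intro a b hn ha hb
    obtain ⟨x, xs, rfl⟩ := List.exists_cons_of_ne_nil ha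
    obtain ⟨y, ys, rfl⟩ := List.exists_cons_of_ne_nil hb
    have hAw : ∀ w ∈ shuffles (x :: xs) (y :: ys), A w = A w.dropLast - A w.tail := by
      intro w hw
      have hlen := length_of_mem_shuffles _ _ w hw
      obtain ⟨c, rest, rfl⟩ := List.exists_cons_of_ne_nil
        (ne_nil_of_mem_shuffles_left (by simp) hw)
      have hrest : rest ≠ [] := by
        intro h; subst h; simp at hlen; omega
      have hsplit : rest.dropLast ++ [rest.getLast hrest] = rest :=
        List.dropLast_append_getLast hrest
      calc A (c :: rest) = A (c :: (rest.dropLast ++ [rest.getLast hrest])) := by rw [hsplit]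
        _ = A (c :: rest.dropLast) - A (rest.dropLast ++ [rest.getLast hrest]) :=
            hrec c (rest.getLast hrest) rest.dropLast
        _ = A (c :: rest).dropLast - A (c :: rest).tail := by
            rw [hsplit]
            congr 1
            obtain ⟨e, es, rfl⟩ := List.exists_cons_of_ne_nil hrest
            simp
    have step : shSum A (x :: xs) (y :: ys)
        = ((shuffles (x :: xs) (y :: ys)).map (fun w => A w.dropLast)).sum
          - ((shuffles (x :: xs) (y :: ys)).map (fun w => A w.tail)).sum := by
      rw [shSum, List.map_congr_left hAw, sum_map_sub]
    have htail : ((shuffles (x :: xs) (y :: ys)).map (fun w => A w.tail)).sum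
        = shSum A xs (y :: ys) + shSum A (x :: xs) ys := by
      rw [shuffles_cons_cons, List.map_append, List.map_map, List.map_map, List.sum_append]
      simp [shSum, Function.comp_def]
    have hdrop : ((shuffles (x :: xs) (y :: ys)).map (fun w => A w.dropLast)).sum
        = shSum A (x :: xs).dropLast (y :: ys) + shSum A (x :: xs) (y :: ys).dropLast :=
      sum_dropLast A (x :: xs) (y :: ys) (by simp) (by simp)
    simp only [List.length_cons] at hn
    have e1 : shSum A (x :: xs).dropLast (y :: ys) = shSum A xs (y :: ys) := by
      rcases eq_or_ne xs [] with rfl | hxs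
      · simp
      · obtain ⟨c, cs, rfl⟩ := List.exists_cons_of_ne_nil hxs
        rw [ih ((x :: c :: cs).dropLast) (y :: ys) (by simp only [List.length_dropLast, List.length_cons] at hn ⊢; omega) (by simp) (by simp),
          ih (c :: cs) (y :: ys) (by simp only [List.length_cons] at hn ⊢; omega) (by simp) (by simp)]
    have e2 : shSum A (x :: xs) (y :: ys).dropLast = shSum A (x :: xs) ys := by
      rcases eq_or_ne ys [] with rfl | hys
      · simp
      · obtain ⟨c, cs, rfl⟩ := List.exists_cons_of_ne_nil hys
        rw [ih (x :: xs) ((y :: c :: cs).dropLast) (by simp only [List.length_dropLast, List.length_cons] at hn ⊢; omega) (by simp) (by simp),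
          ih (x :: xs) (c :: cs) (by simp only [List.length_cons] at hn ⊢; omega) (by simp) (by simp)]
    rw [step, htail, hdrop, e1, e2]
    ring

/-- a mould satisfying the recursion
`A^m(x_1,…,x_m) = A^{m-1}(x_1,…,x_{m-1}) − A^{m-1}(x_2,…,x_m)` (m ≥ 2) is alternal. -/
theorem stmt0 {K : Type*} [Field K] (A : List K → K)
    (hrec : ∀ (x y : K) (l : List K), A (x :: (l ++ [y])) = A (x :: l) - A (l ++ [y])) :
    ∀ a b : List K, a ≠ [] → b ≠ [] → shSum A a b = 0 := by
  intro a b ha hb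
  exact stmt0_aux A hrec (a.length + b.length) a b le_rfl ha hb
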